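/- Let μ, ν, θ, γ, k > 0, δ ≥ 0, β > ν + μ, set R₀ = β/(ν+μ), p_c = 1 − 1/R₀, and assume γ < p_c(p_c − δ). Define p* = (δ + θμp_c + √((δ + θμp_c)² + 4γ(1 + θμ)))/(2(1 + θμ)), S* = (ν+μ)/β, and I* = (μ/(ν+μ))(p_c − p*). Then 0 < p* < 1, I* > 0, and (S*, I*, p*) is an equilibrium of the system, i.e. μ(1 − p*) − μS* − βS*I* = 0, βS*I* − (ν+μ)I* = 0, and k(p*(1 − p*)(δ + θβS*I* − p*) + γ(1 − p*)) = 0. -/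

import Mathlib

/-- The endemic equilibrium `(S*, I*, p*)` of the SIR model with
evolutionary vaccination game: under `γ < γ_c = p_c (p_c − δ)` it satisfies
`0 < p* < 1`, `I* > 0`, and annihilates the right-hand sides of the system. -/
theorem endemic_equilibrium_exists (μ ν θ γ k δ β : ℝ)
    (hμ : 0 < μ) (hν : 0 < ν) (hθ : 0 < θ) (hγ : 0 < γ) (hk : 0 < k)
    (hδ : 0 ≤ δ) (hβ : ν + μ < β) :
    let R0 : ℝ := β / (ν + μ)
    let pc : ℝ := 1 - 1 / R0
    let pstar : ℝ := (δ + θ * μ * pc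
      + Real.sqrt ((δ + θ * μ * pc) ^ 2 + 4 * γ * (1 + θ * μ))) / (2 * (1 + θ * μ))
    let Sstar : ℝ := (ν + μ) / β
    let Istar : ℝ := μ / (ν + μ) * (pc - pstar)
    γ < pc * (pc - δ) →
      (0 < pstar ∧ pstar < 1) ∧ 0 < Istar ∧
      μ * (1 - pstar) - μ * Sstar - β * Sstar * Istar = 0 ∧
      β * Sstar * Istar - (ν + μ) * Istar = 0 ∧
      k * (pstar * (1 - pstar) * (δ + θ * (β * Sstar * Istar) - pstar)
        + γ * (1 - pstar)) = 0 := by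
  intro R0 pc pstar Sstar Istar hγc
  have hnm : 0 < ν + μ := by linarith
  have hβ0 : 0 < β := by linarith
  have hpc : pc = 1 - (ν + μ) / β := by
    simp only [pc, R0, one_div_div]
  have hpc0 : 0 < pc := by
    rw [hpc]
    have : (ν + μ) / β < 1 := (div_lt_one hβ0).mpr hβ
    linarith
  have hpc1 : pc < 1 := by
    rw [hpc]
    have : 0 < (ν + μ) / β := div_pos hnm hβ0
    linarith
  have ha : 0 < 1 + θ * μ := by positivity
  set b : ℝ := δ + θ * μ * pc with hb
  have hb0 : 0 < b := by positivity
  set s : ℝ := Real.sqrt (b ^ 2 + 4 * γ * (1 + θ * μ)) with hs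
  have harg : 0 < b ^ 2 + 4 * γ * (1 + θ * μ) := by positivity
  have hs0 : 0 < s := Real.sqrt_pos.mpr harg
  have hs2 : s ^ 2 = b ^ 2 + 4 * γ * (1 + θ * μ) := Real.sq_sqrt harg.le
  have hps : 2 * (1 + θ * μ) * pstar = b + s := by
    simp only [pstar]
    field_simp
    rw [hs, hb]; ring_nf
  -- quadratic relation
  have hquad : (1 + θ * μ) * pstar ^ 2 = b * pstar + γ := by
    have h := congrArg (· ^ 2) hps
    nlinarith [h, hs2]
  have hp0 : 0 < pstar := by
    have h2 : 2 * (1 + θ * μ) * 0 < 2 * (1 + θ * μ) * pstar := by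
      rw [mul_zero, hps]; linarith
    exact lt_of_mul_lt_mul_left h2 (by positivity)
  -- pstar < pc
  have hδpc : δ < pc := by
    by_contra h
    push_neg at h
    have : pc * (pc - δ) ≤ 0 :=
      mul_nonpos_of_nonneg_of_nonpos hpc0.le (by linarith)
    linarith
  have hθμpc : 0 < θ * μ * pc := by positivity
  have hc0 : 0 < 2 * (1 + θ * μ) * pc - b := by rw [hb]; linarith
  have hslt : s < 2 * (1 + θ * μ) * pc - b := by
    rw [hs]
    refine (Real.sqrt_lt' hc0).mpr ?_
    nlinarith [mul_pos ha (show (0:ℝ) < pc * (pc - δ) - γ by linarith)]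
  have hppc : pstar < pc := by
    have h2 : 2 * (1 + θ * μ) * pstar < 2 * (1 + θ * μ) * pc := by
      rw [hps]; linarith
    exact lt_of_mul_lt_mul_left h2 (by positivity)
  have hp1 : pstar < 1 := lt_trans hppc hpc1
  have hI : 0 < Istar := by
    simp only [Istar]
    exact mul_pos (div_pos hμ hnm) (by linarith)
  have hβS : β * Sstar = ν + μ := by
    simp only [Sstar]; field_simp
  have hSI : β * Sstar * Istar = μ * (pc - pstar) := by
    simp only [Istar]
    rw [hβS]; field_simp
  refine ⟨⟨hp0, hp1⟩, hI, ?_, ?_, ?_⟩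
  · have hSs : μ * Sstar = μ * (1 - pc) := by
      simp only [Sstar]
      rw [hpc]; ring_nf
    rw [hSI, hSs]; ring
  · rw [hSI]
    simp only [Istar]
    field_simp
    ring
  · rw [hSI]
    have : pstar * (1 - pstar) * (δ + θ * (μ * (pc - pstar)) - pstar)
        + γ * (1 - pstar) = (1 - pstar) * ((b * pstar + γ) - (1 + θ * μ) * pstar ^ 2) := by
      rw [hb]; ring
    rw [this, hquad]
    ring
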